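/- arXiv:1811.06144 — 3 statements merged into one kernel-verified Lean document; each statement's English description precedes it below -/
import Mathlib

section
/- Fix U > 0 and suppose Z : (0,∞) → (0,1) satisfies Y·Z(Y) = constant (i.e., Z(Y) = K/Y for a constant K > 0 determined by the SOP constraint). Then the function Ω(Y) = log₂((1+Y)/(1+Y Z(Y))) · exp(−U Y) = log₂((1+Y)/(1+K)) · exp(−U Y) has a unique stationary point Y* on (K, ∞) satisfying 1/((1+Y)ln 2) = U·log₂((1+Y)/(1+K)), and the second derivative of Ω at Y* equals −exp(−U Y*)·(U(1+Y*)+1)/((1+Y*)² ln 2) < 0; hence Ω is maximized at Y*. -/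
open Real Filter Set

noncomputable def Gf (U c : ℝ) (Y : ℝ) : ℝ :=
  (Real.log (1 + Y) - c) / Real.log 2 * Real.exp (-U * Y)

noncomputable def phi (U c : ℝ) (Y : ℝ) : ℝ :=
  (1 + Y)⁻¹ - U * (Real.log (1 + Y) - c)

noncomputable def Hf (U c : ℝ) (Y : ℝ) : ℝ :=
  Real.exp (-U * Y) * phi U c Y / Real.log 2

lemma hexp (U Y : ℝ) : HasDerivAt (fun Y => Real.exp (-U * Y)) (Real.exp (-U * Y) * -U) Y := by
  have h := ((hasDerivAt_id Y).const_mul (-U)).exp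
  simpa using h

lemma hlog (Y : ℝ) (hY : -1 < Y) :
    HasDerivAt (fun Y => Real.log (1 + Y)) ((1 + Y)⁻¹) Y := by
  have h1 : HasDerivAt (fun Y : ℝ => 1 + Y) 1 Y := (hasDerivAt_id Y).const_add 1
  have h := h1.log (by linarith)
  simpa [one_div] using h

lemma hasDerivAt_Gf (U c Y : ℝ) (hY : -1 < Y) :
    HasDerivAt (Gf U c) (Hf U c Y) Y := by
  have hA := ((hlog Y hY).sub_const c).div_const (Real.log 2)
  have h := hA.mul (hexp U Y)
  refine HasDerivAt.congr_deriv h ?_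
  unfold Hf phi
  ring

lemma hasDerivAt_phi (U c Y : ℝ) (hY : -1 < Y) :
    HasDerivAt (phi U c) (-((1+Y)^2)⁻¹ - U * (1+Y)⁻¹) Y := by
  have h1 : HasDerivAt (fun Y : ℝ => 1 + Y) 1 Y := (hasDerivAt_id Y).const_add 1
  have hinv := h1.inv (by linarith : (1:ℝ) + Y ≠ 0)
  have h2 := ((hlog Y hY).sub_const c).const_mul U
  have h := hinv.sub h2
  refine HasDerivAt.congr_deriv h ?_
  ring

lemma hasDerivAt_Hf (U c Y : ℝ) (hY : -1 < Y) :
    HasDerivAt (Hf U c)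
      ((Real.exp (-U*Y) * -U * phi U c Y +
        Real.exp (-U*Y) * (-((1+Y)^2)⁻¹ - U * (1+Y)⁻¹)) / Real.log 2) Y :=
  ((hexp U Y).mul (hasDerivAt_phi U c Y hY)).div_const _

lemma phi_strictAntiOn (U c : ℝ) (hU : 0 < U) : StrictAntiOn (phi U c) (Set.Ioi (-1)) := by
  intro a ha b hb hab
  simp only [Set.mem_Ioi] at ha hb
  have h1 : (1 + b)⁻¹ < (1 + a)⁻¹ := by
    apply inv_strictAnti₀ <;> linarith
  have h2 : Real.log (1 + a) < Real.log (1 + b) := Real.log_lt_log (by linarith) (by linarith)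
  have h3 := mul_lt_mul_of_pos_left h2 hU
  unfold phi
  linarith

lemma eq_root_iff (U K Y : ℝ) (hK : 0 < K) (hY : (0:ℝ) < 1 + Y) :
    (1 / ((1 + Y) * Real.log 2) = U * Real.logb 2 ((1 + Y) / (1 + K))) ↔
      phi U (Real.log (1 + K)) Y = 0 := by
  have hL2 : (0:ℝ) < Real.log 2 := Real.log_pos (by norm_num)
  rw [Real.logb, Real.log_div (ne_of_gt hY) (by positivity)]
  unfold phi
  rw [show 1 / ((1 + Y) * Real.log 2) = ((1+Y)⁻¹)/(Real.log 2) by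
        rw [one_div, mul_inv, ← div_eq_mul_inv],
      mul_div_assoc', div_eq_div_iff hL2.ne' hL2.ne', mul_left_inj' hL2.ne', sub_eq_zero]

lemma Gf_eq (U K Y : ℝ) (hY : (0:ℝ) < 1 + Y) (hK : (0:ℝ) < 1 + K) :
    Real.logb 2 ((1+Y)/(1+K)) * Real.exp (-U*Y) = Gf U (Real.log (1+K)) Y := by
  rw [Gf, Real.logb, Real.log_div (ne_of_gt hY) (ne_of_gt hK)]

/-- Theorem 2: with `Z(Y) = K/Y` fixed by the SOP constraint (`Y·Z(Y) = K`),
the throughput `Ω(Y) = log₂((1+Y)/(1+YZ(Y)))·exp(−UY)` has a unique stationary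
point `Y* ∈ (K,∞)` satisfying `1/((1+Y)ln 2) = U·log₂((1+Y)/(1+K))`, where the
second derivative equals `−exp(−UY*)(U(1+Y*)+1)/((1+Y*)² ln 2) < 0`, and `Ω` is
maximized on `(K,∞)` at `Y*`. -/
theorem stmt_6 (U K : ℝ) (hU : 0 < U) (hK : 0 < K)
    (Z : ℝ → ℝ) (hZ : ∀ Y > (0:ℝ), Y * Z Y = K) :
    ∃ Ys ∈ Set.Ioi K,
      (1 / ((1 + Ys) * Real.log 2) = U * Real.logb 2 ((1 + Ys) / (1 + K))) ∧
      (∀ Y ∈ Set.Ioi K,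
        1 / ((1 + Y) * Real.log 2) = U * Real.logb 2 ((1 + Y) / (1 + K)) → Y = Ys) ∧
      (iteratedDeriv 2
          (fun Y => Real.logb 2 ((1 + Y) / (1 + Y * Z Y)) * Real.exp (-U * Y)) Ys =
        -Real.exp (-U * Ys) * (U * (1 + Ys) + 1) / ((1 + Ys) ^ 2 * Real.log 2)) ∧
      (-Real.exp (-U * Ys) * (U * (1 + Ys) + 1) / ((1 + Ys) ^ 2 * Real.log 2) < 0) ∧
      (∀ Y ∈ Set.Ioi K,
        Real.logb 2 ((1 + Y) / (1 + Y * Z Y)) * Real.exp (-U * Y) ≤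
          Real.logb 2 ((1 + Ys) / (1 + Ys * Z Ys)) * Real.exp (-U * Ys)) := by
  set c := Real.log (1 + K) with hc
  have hK1 : (0:ℝ) < 1 + K := by linarith
  have hL2 : (0:ℝ) < Real.log 2 := Real.log_pos (by norm_num)
  have hc0 : 0 < c := Real.log_pos (by linarith)
  -- existence of the root of phi
  set B := Real.exp (c + 1/U + 1) - 1 with hB
  have hB1 : 1 + B = Real.exp (c + 1/U + 1) := by rw [hB]; ring
  have hBK : K < B := by
    have h1 : (1:ℝ) + K < 1 + B := by
      rw [hB1, ← Real.exp_log hK1, ← hc]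
      have h1U : 0 < 1/U := one_div_pos.mpr hU
      exact Real.exp_lt_exp.mpr (by linarith)
    linarith
  have hphiK : 0 < phi U c K := by
    simp only [phi, ← hc, sub_self, mul_zero, sub_zero]
    positivity
  have hphiB : phi U c B < 0 := by
    have hlB : Real.log (1 + B) = c + 1/U + 1 := by rw [hB1, Real.log_exp]
    have hBinv : (1 + B)⁻¹ < 1 := by
      rw [hB1]
      rw [inv_lt_one_iff₀]
      right
      calc (1:ℝ) = Real.exp 0 := Real.exp_zero.symm
        _ < _ := Real.exp_lt_exp.mpr (by have h1U : 0 < 1/U := one_div_pos.mpr hU; linarith)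
    have hUU : U * (1/U) = 1 := mul_one_div_cancel hU.ne'
    simp only [phi, hlB]
    nlinarith
  have hcont : ContinuousOn (phi U c) (Set.Icc K B) := fun x hx =>
    ((hasDerivAt_phi U c x (by have := hx.1; linarith)).continuousAt).continuousWithinAt
  obtain ⟨Ys, hYsmem, hroot⟩ := intermediate_value_Icc' (le_of_lt hBK) hcont
    ⟨le_of_lt hphiB, le_of_lt hphiK⟩
  have hYsK : K < Ys := lt_of_le_of_ne hYsmem.1 (by
    intro h; rw [h, hroot] at hphiK; exact lt_irrefl 0 hphiK)
  have hYs1 : (-1:ℝ) < Ys := by linarith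
  have hYspos : (0:ℝ) < Ys := by linarith
  refine ⟨Ys, Set.mem_Ioi.mpr hYsK, ?_, ?_, ?_, ?_, ?_⟩
  · exact (eq_root_iff U K Ys hK (by linarith)).mpr hroot
  · intro Y hY heq
    have hYK : K < Y := hY
    have h0 : phi U c Y = 0 := (eq_root_iff U K Y hK (by linarith)).mp heq
    exact (phi_strictAntiOn U c hU).injOn (by simp; linarith) (by simp; linarith)
      (by rw [h0, hroot])
  · -- second derivative
    have hmem0 : Set.Ioi (0:ℝ) ∈ nhds Ys := Ioi_mem_nhds hYspos
    have hfg : (fun Y => Real.logb 2 ((1 + Y) / (1 + Y * Z Y)) * Real.exp (-U * Y))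
        =ᶠ[nhds Ys] Gf U c := by
      filter_upwards [hmem0] with Y hY0
      rw [hZ Y hY0, Gf_eq U K Y (by simp at hY0; linarith) hK1]
    have hmem1 : Set.Ioi (-1:ℝ) ∈ nhds Ys := Ioi_mem_nhds hYs1
    have hGH : deriv (Gf U c) =ᶠ[nhds Ys] Hf U c := by
      filter_upwards [hmem1] with Y hY1
      exact (hasDerivAt_Gf U c Y hY1).deriv
    have e1 : iteratedDeriv 2
        (fun Y => Real.logb 2 ((1 + Y) / (1 + Y * Z Y)) * Real.exp (-U * Y)) Ys
        = deriv (deriv (fun Y => Real.logb 2 ((1 + Y) / (1 + Y * Z Y)) * Real.exp (-U * Y))) Ys := by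
      rw [show (2:ℕ) = 1 + 1 from rfl, iteratedDeriv_succ, iteratedDeriv_one]
    rw [e1, (hfg.deriv.trans hGH).deriv_eq, (hasDerivAt_Hf U c Ys hYs1).deriv, hroot]
    have h1Ys : (0:ℝ) < 1 + Ys := by linarith
    field_simp
    ring
  · apply div_neg_of_neg_of_pos
    · have h1 : 0 < U * (1 + Ys) + 1 := by nlinarith
      nlinarith [mul_pos (Real.exp_pos (-U * Ys)) h1]
    · positivity
  · -- maximality
    have hmono : MonotoneOn (Gf U c) (Set.Icc K Ys) := by
      apply monotoneOn_of_deriv_nonneg (convex_Icc K Ys)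
      · exact fun x hx =>
          ((hasDerivAt_Gf U c x (by have := hx.1; linarith)).continuousAt).continuousWithinAt
      · intro x hx
        rw [interior_Icc] at hx
        exact ((hasDerivAt_Gf U c x (by have := hx.1; linarith)).differentiableAt).differentiableWithinAt
      · intro x hx
        rw [interior_Icc] at hx
        rw [(hasDerivAt_Gf U c x (by have := hx.1; linarith)).deriv]
        have hphix : 0 < phi U c x := by
          have := phi_strictAntiOn U c hU (by simp; have := hx.1; linarith)
            (by simp; linarith) hx.2
          linarith [hroot ▸ this]
        unfold Hf
        positivity
    have hanti : AntitoneOn (Gf U c) (Set.Ici Ys) := by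
      apply antitoneOn_of_deriv_nonpos (convex_Ici Ys)
      · exact fun x hx =>
          ((hasDerivAt_Gf U c x (by have := hx; simp at this; linarith)).continuousAt).continuousWithinAt
      · intro x hx
        rw [interior_Ici] at hx
        have hx1 : (-1:ℝ) < x := by have := Set.mem_Ioi.mp hx; linarith
        exact ((hasDerivAt_Gf U c x hx1).differentiableAt).differentiableWithinAt
      · intro x hx
        rw [interior_Ici] at hx
        have hxYs : Ys < x := hx
        rw [(hasDerivAt_Gf U c x (by linarith)).deriv]
        have hphix : phi U c x < 0 := by
          have := phi_strictAntiOn U c hU (by simp; linarith) (by simp; linarith) hxYs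
          linarith [hroot ▸ this]
        unfold Hf
        apply div_nonpos_of_nonpos_of_nonneg
        · nlinarith [Real.exp_pos (-U * x)]
        · exact hL2.le
    intro Y hY
    have hYK : K < Y := hY
    rw [hZ Y (by linarith), hZ Ys (by linarith),
      Gf_eq U K Y (by linarith) hK1, Gf_eq U K Ys (by linarith) hK1]
    rcases le_total Y Ys with hle | hle
    · exact hmono ⟨hYK.le, hle⟩ ⟨hYsK.le, le_refl _⟩ hle
    · exact hanti (Set.self_mem_Ici) hle hle
end

section
/- Fix R_S > 0, τ > 0 and define μ_{A2}(R_C, R_S) implicitly via G(μ_{A2}, μ_B/ρ, R_C, R_S) = τ, where G(μ, g, R_C, R_S) = ((2^{R_C−R_S}−1) P_B μ d_AB^{−α} / ((2^{R_C}−1)(σ_B² + ρ P_B g)) + 1)^{−1} · ((2^{R_C−R_S}−1) σ_E² μ d_AB^{−α} / ((2^{R_C}−1)(σ_B² + ρ P_B g)))^{−2/α}. Then the partial derivative of the throughput Ω̃ = R_S exp(−μ_{A2}(R_C, R_S)) with respect to R_C equals R_S μ_{A2} exp(−μ_{A2}) ln 2 · (1/(2^{R_C−R_S}−1) − 1/(2^{R_C}−1))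 > 0; hence Ω̃ is strictly increasing in R_C. -/
/-- Appendix B, Case 2: with `μ_{A2}(R_C)` defined implicitly by
`G(μ_{A2}, μ_B/ρ, R_C, R_S) = τ`, the throughput `Ω̃ = R_S exp(−μ_{A2}(R_C))`
has derivative in `R_C` equal to
`R_S μ_{A2} exp(−μ_{A2}) ln 2 (1/(2^{R_C−R_S}−1) − 1/(2^{R_C}−1)) > 0`;
hence `Ω̃` is strictly increasing in `R_C`. -/
theorem stmt_17 (PB ρ σB2 σE2 dAB α μB τ RS : ℝ)
    (hPB : 0 ≤ PB) (hρ0 : 0 < ρ) (hρ1 : ρ ≤ 1) (hσB : 0 < σB2) (hσE : 0 < σE2)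
    (hd : 0 < dAB) (hα : 2 ≤ α) (hμB : 0 ≤ μB) (hτ : 0 < τ) (hRS : 0 < RS)
    (μA2 : ℝ → ℝ) (hμA2pos : ∀ RC > RS, 0 < μA2 RC)
    (hμA2 : ∀ RC > RS,
      ((((2:ℝ) ^ (RC - RS) - 1) * PB * μA2 RC * dAB ^ (-α)) /
          (((2:ℝ) ^ RC - 1) * (σB2 + ρ * PB * (μB / ρ))) + 1)⁻¹ *
        ((((2:ℝ) ^ (RC - RS) - 1) * σE2 * μA2 RC * dAB ^ (-α)) /
          (((2:ℝ) ^ RC - 1) * (σB2 + ρ * PB * (μB / ρ)))) ^ (-(2 / α)) = τ) :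
    (∀ RC > RS,
      HasDerivAt (fun r : ℝ => RS * Real.exp (-(μA2 r)))
        (RS * μA2 RC * Real.exp (-(μA2 RC)) *
          (1 / ((2:ℝ) ^ (RC - RS) - 1) - 1 / ((2:ℝ) ^ RC - 1)) * Real.log 2) RC ∧
      0 < RS * μA2 RC * Real.exp (-(μA2 RC)) *
          (1 / ((2:ℝ) ^ (RC - RS) - 1) - 1 / ((2:ℝ) ^ RC - 1)) * Real.log 2) ∧
    StrictMonoOn (fun r : ℝ => RS * Real.exp (-(μA2 r))) (Set.Ioi RS) := by
  have hα0 : (0:ℝ) < α := lt_of_lt_of_le two_pos hα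
  have hp : (0:ℝ) < 2 / α := by positivity
  set S : ℝ := σB2 + ρ * PB * (μB / ρ) with hSdef
  have hS : 0 < S := by
    have : 0 ≤ ρ * PB * (μB / ρ) :=
      mul_nonneg (mul_nonneg hρ0.le hPB) (div_nonneg hμB hρ0.le)
    simp only [hSdef]; linarith
  have hdpow : 0 < dAB ^ (-α) := Real.rpow_pos_of_pos hd _
  -- abbreviations
  set a : ℝ → ℝ := fun r => (2:ℝ) ^ (r - RS) - 1 with ha_def
  set b : ℝ → ℝ := fun r => (2:ℝ) ^ r - 1 with hb_def
  have ha_pos : ∀ r > RS, 0 < a r := by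
    intro r hr
    have : (1:ℝ) < (2:ℝ) ^ (r - RS) := by
      have := Real.one_lt_rpow_iff_of_pos (x := (2:ℝ)) (y := r - RS) two_pos
      exact this.2 (Or.inl ⟨one_lt_two, by linarith⟩)
    simpa [ha_def] using sub_pos.2 this
  have hb_pos : ∀ r > RS, 0 < b r := by
    intro r hr
    have : (1:ℝ) < (2:ℝ) ^ r := by
      have := Real.one_lt_rpow_iff_of_pos (x := (2:ℝ)) (y := r) two_pos
      exact this.2 (Or.inl ⟨one_lt_two, by linarith⟩)
    simpa [hb_def] using sub_pos.2 this
  have hab : ∀ r > RS, a r < b r := by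
    intro r hr
    have : (2:ℝ) ^ (r - RS) < (2:ℝ) ^ r :=
      Real.rpow_lt_rpow_left_iff one_lt_two |>.2 (by linarith)
    simpa [ha_def, hb_def] using this
  -- the substitution t
  set t : ℝ → ℝ := fun r => (a r * μA2 r * dAB ^ (-α)) / (b r * S) with ht_def
  have ht_pos : ∀ r > RS, 0 < t r := by
    intro r hr
    have := ha_pos r hr; have := hb_pos r hr; have := hμA2pos r hr
    simp only [ht_def]; positivity
  -- equation in terms of t
  have heq : ∀ r > RS, (PB * t r + 1)⁻¹ * (σE2 * t r) ^ (-(2/α)) = τ := by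
    intro r hr
    have h := hμA2 r hr
    have e1 : (a r * PB * μA2 r * dAB ^ (-α)) / (b r * S) = PB * t r := by
      simp only [ht_def]; ring
    have e2 : (a r * σE2 * μA2 r * dAB ^ (-α)) / (b r * S) = σE2 * t r := by
      simp only [ht_def]; ring
    rw [← e1, ← e2]
    exact h
  -- strict antitonicity of f y = (PB*y+1)⁻¹ * (σE2*y)^(-(2/α)) on positives
  have hinj : ∀ y1 > (0:ℝ), ∀ y2 > (0:ℝ),
      (PB * y1 + 1)⁻¹ * (σE2 * y1) ^ (-(2/α)) = (PB * y2 + 1)⁻¹ * (σE2 * y2) ^ (-(2/α)) →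
      y1 = y2 := by
    have key : ∀ y1 y2 : ℝ, 0 < y1 → y1 < y2 →
        (PB * y2 + 1)⁻¹ * (σE2 * y2) ^ (-(2/α)) < (PB * y1 + 1)⁻¹ * (σE2 * y1) ^ (-(2/α)) := by
      intro y1 y2 hy1 h12
      have hy2 : 0 < y2 := hy1.trans h12
      have hB : (σE2 * y2) ^ (-(2/α)) < (σE2 * y1) ^ (-(2/α)) := by
        rw [Real.rpow_neg (by positivity), Real.rpow_neg (by positivity)]
        have h1 : (σE2 * y1) ^ (2/α) < (σE2 * y2) ^ (2/α) :=
          Real.rpow_lt_rpow (by positivity) (by nlinarith) hp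
        have h1pos : (0:ℝ) < (σE2 * y1) ^ (2/α) := Real.rpow_pos_of_pos (by positivity) _
        gcongr
      have hA : (PB * y2 + 1)⁻¹ ≤ (PB * y1 + 1)⁻¹ := by
        have : PB * y1 + 1 ≤ PB * y2 + 1 := by nlinarith
        have h1 : (0:ℝ) < PB * y1 + 1 := by positivity
        gcongr
      have hA1pos : (0:ℝ) < (PB * y1 + 1)⁻¹ := by positivity
      have hB2pos : (0:ℝ) ≤ (σE2 * y2) ^ (-(2/α)) :=
        (Real.rpow_pos_of_pos (by positivity) _).le
      exact mul_lt_mul' hA hB hB2pos hA1pos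
    intro y1 hy1 y2 hy2 h
    rcases lt_trichotomy y1 y2 with hlt | heq' | hgt
    · exact absurd h (ne_of_lt (key y1 y2 hy1 hlt)).symm
    · exact heq'
    · exact absurd h (ne_of_lt (key y2 y1 hy2 hgt))
  -- t is constant on Ioi RS
  have hRS1 : RS + 1 > RS := by linarith
  have htconst : ∀ r > RS, t r = t (RS + 1) := by
    intro r hr
    exact hinj (t r) (ht_pos r hr) (t (RS+1)) (ht_pos _ hRS1)
      (by rw [heq r hr, heq _ hRS1])
  -- explicit formula for μA2
  set c : ℝ := t (RS + 1) * S / dAB ^ (-α) with hc_def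
  have hc_pos : 0 < c := by
    have := ht_pos _ hRS1
    simp only [hc_def]; positivity
  have hμ_eq : ∀ r > RS, μA2 r = c * (b r / a r) := by
    intro r hr
    have h := htconst r hr
    have hb' : (0:ℝ) < b r := hb_pos r hr
    have ha' : (0:ℝ) < a r := ha_pos r hr
    -- t r = (a r * μA2 r * d)/(b r * S) = t (RS+1)  ⇒  μA2 r = t(RS+1)*S/d * (b r / a r)
    have : (a r * μA2 r * dAB ^ (-α)) / (b r * S) = t (RS + 1) := by
      rw [← h]
    field_simp [hc_def] at this ⊢
    rw [hc_def, mul_div_assoc', eq_div_iff hdpow.ne']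
    linear_combination this
  have L2 : (0:ℝ) < Real.log 2 := Real.log_pos one_lt_two
  have key : ∀ RC > RS,
      HasDerivAt (fun r : ℝ => RS * Real.exp (-(μA2 r)))
        (RS * μA2 RC * Real.exp (-(μA2 RC)) *
          (1 / ((2:ℝ) ^ (RC - RS) - 1) - 1 / ((2:ℝ) ^ RC - 1)) * Real.log 2) RC ∧
      0 < RS * μA2 RC * Real.exp (-(μA2 RC)) *
          (1 / ((2:ℝ) ^ (RC - RS) - 1) - 1 / ((2:ℝ) ^ RC - 1)) * Real.log 2 := by
    intro RC hRC
    have ha' : (0:ℝ) < a RC := ha_pos RC hRC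
    have hb' : (0:ℝ) < b RC := hb_pos RC hRC
    have hab' : a RC < b RC := hab RC hRC
    have hLA : (2:ℝ) ^ (RC - RS) = a RC + 1 := by simp [ha_def]
    have hLB : (2:ℝ) ^ RC = b RC + 1 := by simp [hb_def]
    have hB : HasDerivAt b ((b RC + 1) * Real.log 2) RC := by
      rw [hb_def, ← hLB]
      exact ((Real.hasStrictDerivAt_const_rpow two_pos RC).hasDerivAt).sub_const 1
    have hA : HasDerivAt a ((a RC + 1) * Real.log 2) RC := by
      rw [ha_def, ← hLA]
      have h1 : HasDerivAt (fun r : ℝ => r - RS) 1 RC := (hasDerivAt_id RC).sub_const RS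
      have h2 := ((Real.hasStrictDerivAt_const_rpow two_pos (RC - RS)).hasDerivAt).comp RC h1
      simpa using h2.sub_const 1
    have hQ : HasDerivAt (fun r => c * (b r / a r))
        (c * (((b RC + 1) * Real.log 2 * a RC - b RC * ((a RC + 1) * Real.log 2)) / (a RC) ^ 2))
        RC := (hB.div hA ha'.ne').const_mul c
    have hE : HasDerivAt (fun r => RS * Real.exp (-(c * (b r / a r))))
        (RS * (Real.exp (-(c * (b RC / a RC))) *
          (-(c * (((b RC + 1) * Real.log 2 * a RC - b RC * ((a RC + 1) * Real.log 2)) /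
            (a RC) ^ 2))))) RC := (hQ.neg.exp).const_mul RS
    have hmem : Set.Ioi RS ∈ nhds RC := isOpen_Ioi.mem_nhds hRC
    have hev : (fun r : ℝ => RS * Real.exp (-(μA2 r))) =ᶠ[nhds RC]
        (fun r => RS * Real.exp (-(c * (b r / a r)))) :=
      Filter.eventuallyEq_of_mem hmem (fun r hr => by rw [hμ_eq r hr])
    have hD := hE.congr_of_eventuallyEq hev
    have hval : RS * μA2 RC * Real.exp (-(μA2 RC)) *
          (1 / ((2:ℝ) ^ (RC - RS) - 1) - 1 / ((2:ℝ) ^ RC - 1)) * Real.log 2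
        = RS * (Real.exp (-(c * (b RC / a RC))) *
          (-(c * (((b RC + 1) * Real.log 2 * a RC - b RC * ((a RC + 1) * Real.log 2)) /
            (a RC) ^ 2)))) := by
      rw [hμ_eq RC hRC, hLA, hLB]
      have h1 : a RC + 1 - 1 = a RC := by ring
      have h2 : b RC + 1 - 1 = b RC := by ring
      rw [h1, h2]
      field_simp
      ring
    have hpos : 0 < RS * μA2 RC * Real.exp (-(μA2 RC)) *
          (1 / ((2:ℝ) ^ (RC - RS) - 1) - 1 / ((2:ℝ) ^ RC - 1)) * Real.log 2 := by
      have hdiff : 0 < 1 / ((2:ℝ) ^ (RC - RS) - 1) - 1 / ((2:ℝ) ^ RC - 1) := by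
        have : 1 / b RC < 1 / a RC := one_div_lt_one_div_of_lt ha' hab'
        have e1 : (2:ℝ) ^ (RC - RS) - 1 = a RC := by simp [ha_def]
        have e2 : (2:ℝ) ^ RC - 1 = b RC := by simp [hb_def]
        rw [e1, e2]; linarith
      have := hμA2pos RC hRC
      have := Real.exp_pos (-(μA2 RC))
      positivity
    exact ⟨hval ▸ hD, hpos⟩
  refine ⟨key, ?_⟩
  have hcont : ContinuousOn (fun r : ℝ => RS * Real.exp (-(μA2 r))) (Set.Ioi RS) :=
    fun x hx => ((key x hx).1.differentiableAt.continuousAt).continuousWithinAt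
  refine strictMonoOn_of_deriv_pos (convex_Ioi RS) hcont ?_
  intro x hx
  rw [interior_Ioi] at hx
  rw [(key x hx).1.deriv]
  exact (key x hx).2
end

section
/- Let μ_{A1}(R_C) = (2^{R_C}−1)(σ_B² + P_B μ_B) d_AB^α / P_{Amax} and let μ_{A2}(R_C, R_S) be the unique value μ with G(μ, μ_B/ρ, R_C, R_S) = τ (G as in the SOP constraint, strictly decreasing in μ). If at the optimum of maximizing R_S exp(−max{μ_{A1}, μ_{A2}}) over (R_C, R_S) with 0 < R_S < R_C, then necessarily μ_{A1}(R_C) = μ_{A2}(R_C, R_S); i.e., the two threshold constraints are active simultaneously: in the region μ_{A1} ≥ μ_{A2} the objective strictly decreases in R_C so R_C is pushed down until equality, and in the region μ_{A1} ≤ μ_{A2} the objective strictly increases in R_C so R_C is pushed up until equality. -/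
open Real Filter Topology

private lemma g_anti_aux {P E c x y : ℝ} (hP : 0 ≤ P) (hE : 0 < E) (hc : c < 0)
    (hx : 0 < x) (hxy : x < y) :
    (P * y + 1)⁻¹ * (E * y) ^ c < (P * x + 1)⁻¹ * (E * x) ^ c := by
  have hEx : 0 < E * x := mul_pos hE hx
  have hEy : E * x < E * y := by nlinarith
  have h1 : (E * y) ^ c < (E * x) ^ c := Real.rpow_lt_rpow_of_neg hEx hEy hc
  have hx1 : 0 < P * x + 1 := by nlinarith
  have hy1 : 0 < P * y + 1 := by nlinarith
  have h2 : (P * y + 1)⁻¹ ≤ (P * x + 1)⁻¹ := by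
    apply inv_anti₀ hx1
    nlinarith
  calc (P * y + 1)⁻¹ * (E * y) ^ c < (P * y + 1)⁻¹ * (E * x) ^ c :=
        mul_lt_mul_of_pos_left h1 (inv_pos.mpr hy1)
    _ ≤ (P * x + 1)⁻¹ * (E * x) ^ c :=
        mul_le_mul_of_nonneg_right h2 (Real.rpow_pos_of_pos hEx c).le

private lemma two_rpow_one_lt {r : ℝ} (hr : 0 < r) : (1:ℝ) < (2:ℝ) ^ r := by
  have := Real.rpow_lt_rpow_of_exponent_lt (x := (2:ℝ)) one_lt_two hr
  simpa using this

private lemma u_mono_aux {RS RC RC' : ℝ} (h0 : 0 < RS) (h1 : RS < RC) (h2 : RC < RC') :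
    ((2:ℝ) ^ (RC - RS) - 1) / ((2:ℝ) ^ RC - 1) <
      ((2:ℝ) ^ (RC' - RS) - 1) / ((2:ℝ) ^ RC' - 1) := by
  have ha : (1:ℝ) < (2:ℝ) ^ RS := two_rpow_one_lt h0
  have hat : (2:ℝ) ^ RS < (2:ℝ) ^ RC := Real.rpow_lt_rpow_of_exponent_lt one_lt_two h1
  have htt : (2:ℝ) ^ RC < (2:ℝ) ^ RC' := Real.rpow_lt_rpow_of_exponent_lt one_lt_two h2
  set a := (2:ℝ) ^ RS with hadef
  set t := (2:ℝ) ^ RC with htdef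
  set t' := (2:ℝ) ^ RC' with ht'def
  have ha0 : 0 < a := by linarith
  have hs1 : (2:ℝ) ^ (RC - RS) = t / a := by rw [htdef, hadef, Real.rpow_sub two_pos]
  have hs2 : (2:ℝ) ^ (RC' - RS) = t' / a := by rw [ht'def, hadef, Real.rpow_sub two_pos]
  rw [hs1, hs2]
  have e1 : t / a - 1 = (t - a) / a := by field_simp
  have e2 : t' / a - 1 = (t' - a) / a := by field_simp
  have ht1 : (0:ℝ) < t - 1 := by linarith
  have ht1' : (0:ℝ) < t' - 1 := by linarith
  rw [e1, e2, div_right_comm (t - a), div_right_comm (t' - a),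
    div_lt_div_iff_of_pos_right ha0, div_lt_div_iff₀ ht1 ht1']
  nlinarith [mul_pos (sub_pos.mpr ha) (sub_pos.mpr htt)]

/-- Proposition 1: at an optimum of maximizing `R_S exp(−max{μ_{A1}, μ_{A2}})`
over `0 < R_S < R_C`, the power-budget threshold
`μ_{A1}(R_C) = (2^{R_C}−1)(σ_B² + P_Bμ_B)d_{AB}^α/P_{Amax}` and the SOP threshold
`μ_{A2}(R_C, R_S)` (the unique `μ` with `G(μ, μ_B/ρ, R_C, R_S) = τ`, `G` strictly
decreasing in `μ`) coincide: `μ_{A1}(R_C*) = μ_{A2}(R_C*, R_S*)`. -/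
theorem stmt_18 (PB μB ρ σB2 σE2 dAB α PAmax τ : ℝ)
    (hPB : 0 ≤ PB) (hμB : 0 ≤ μB) (hρ0 : 0 < ρ) (hρ1 : ρ ≤ 1)
    (hσB : 0 < σB2) (hσE : 0 < σE2) (hd : 0 < dAB) (hα : 2 ≤ α)
    (hPA : 0 < PAmax) (hτ : 0 < τ)
    (μA2 : ℝ → ℝ → ℝ) (hμA2pos : ∀ RC RS, 0 < RS → RS < RC → 0 < μA2 RC RS)
    (hμA2 : ∀ RC RS, 0 < RS → RS < RC →
      ((((2:ℝ) ^ (RC - RS) - 1) * PB * μA2 RC RS * dAB ^ (-α)) /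
          (((2:ℝ) ^ RC - 1) * (σB2 + ρ * PB * (μB / ρ))) + 1)⁻¹ *
        ((((2:ℝ) ^ (RC - RS) - 1) * σE2 * μA2 RC RS * dAB ^ (-α)) /
          (((2:ℝ) ^ RC - 1) * (σB2 + ρ * PB * (μB / ρ)))) ^ (-(2 / α)) = τ)
    (hGanti : ∀ RC RS, 0 < RS → RS < RC →
      StrictAntiOn
        (fun μ : ℝ =>
          ((((2:ℝ) ^ (RC - RS) - 1) * PB * μ * dAB ^ (-α)) /
              (((2:ℝ) ^ RC - 1) * (σB2 + ρ * PB * (μB / ρ))) + 1)⁻¹ *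
            ((((2:ℝ) ^ (RC - RS) - 1) * σE2 * μ * dAB ^ (-α)) /
              (((2:ℝ) ^ RC - 1) * (σB2 + ρ * PB * (μB / ρ)))) ^ (-(2 / α)))
        (Set.Ioi 0))
    (RCo RSo : ℝ) (hRSo : 0 < RSo) (hRCo : RSo < RCo)
    (hopt : ∀ RC RS, 0 < RS → RS < RC →
      RS * Real.exp (-(max (((2:ℝ) ^ RC - 1) * (σB2 + PB * μB) * dAB ^ α / PAmax)
            (μA2 RC RS))) ≤
        RSo * Real.exp (-(max (((2:ℝ) ^ RCo - 1) * (σB2 + PB * μB) * dAB ^ α / PAmax)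
            (μA2 RCo RSo)))) :
    ((2:ℝ) ^ RCo - 1) * (σB2 + PB * μB) * dAB ^ α / PAmax = μA2 RCo RSo := by
  have hρμ : ρ * PB * (μB / ρ) = PB * μB := by field_simp
  have hD : 0 < σB2 + ρ * PB * (μB / ρ) := by rw [hρμ]; positivity
  have hDne : (σB2 + ρ * PB * (μB / ρ)) ≠ 0 := ne_of_gt hD
  have h2RC : ∀ RC : ℝ, 0 < RC → 0 < (2:ℝ) ^ RC - 1 := fun RC h => by
    have := two_rpow_one_lt h; linarith
  have hRCo0 : 0 < RCo := hRSo.trans hRCo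
  have hdan : 0 < dAB ^ (-α) := Real.rpow_pos_of_pos hd _
  have hdap : 0 < dAB ^ α := Real.rpow_pos_of_pos hd _
  have hcneg : -(2 / α) < 0 := by
    have : 0 < 2 / α := by positivity
    linarith
  set μ1 := ((2:ℝ) ^ RCo - 1) * (σB2 + PB * μB) * dAB ^ α / PAmax with hμ1def
  set m := μA2 RCo RSo with hmdef
  have hμ1pos : 0 < μ1 := by
    rw [hμ1def]
    exact div_pos (mul_pos (mul_pos (h2RC RCo hRCo0) (by positivity)) hdap) hPA
  have hm : 0 < m := hμA2pos RCo RSo hRSo hRCo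
  -- strict antitonicity of G in μ, proved directly
  have hanti : ∀ RC RS : ℝ, 0 < RS → RS < RC → ∀ z w : ℝ, 0 < z → z < w →
      ((((2:ℝ) ^ (RC - RS) - 1) * PB * w * dAB ^ (-α)) /
          (((2:ℝ) ^ RC - 1) * (σB2 + ρ * PB * (μB / ρ))) + 1)⁻¹ *
        ((((2:ℝ) ^ (RC - RS) - 1) * σE2 * w * dAB ^ (-α)) /
          (((2:ℝ) ^ RC - 1) * (σB2 + ρ * PB * (μB / ρ)))) ^ (-(2 / α)) <
      ((((2:ℝ) ^ (RC - RS) - 1) * PB * z * dAB ^ (-α)) /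
          (((2:ℝ) ^ RC - 1) * (σB2 + ρ * PB * (μB / ρ))) + 1)⁻¹ *
        ((((2:ℝ) ^ (RC - RS) - 1) * σE2 * z * dAB ^ (-α)) /
          (((2:ℝ) ^ RC - 1) * (σB2 + ρ * PB * (μB / ρ)))) ^ (-(2 / α)) := by
    intro RC RS hRS hRC z w hz hzw
    have hden : ((2:ℝ) ^ RC - 1) ≠ 0 := ne_of_gt (h2RC RC (hRS.trans hRC))
    have hg0' : 0 < (2:ℝ) ^ (RC - RS) - 1 := h2RC _ (by linarith)
    have eP : ∀ μ : ℝ, (((2:ℝ) ^ (RC - RS) - 1) * PB * μ * dAB ^ (-α)) /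
        (((2:ℝ) ^ RC - 1) * (σB2 + ρ * PB * (μB / ρ))) =
        (((2:ℝ) ^ (RC - RS) - 1) * PB * dAB ^ (-α) /
          (((2:ℝ) ^ RC - 1) * (σB2 + ρ * PB * (μB / ρ)))) * μ := by
      intro μ; field_simp
    have eE : ∀ μ : ℝ, (((2:ℝ) ^ (RC - RS) - 1) * σE2 * μ * dAB ^ (-α)) /
        (((2:ℝ) ^ RC - 1) * (σB2 + ρ * PB * (μB / ρ))) =
        (((2:ℝ) ^ (RC - RS) - 1) * σE2 * dAB ^ (-α) /
          (((2:ℝ) ^ RC - 1) * (σB2 + ρ * PB * (μB / ρ)))) * μ := by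
      intro μ; field_simp
    rw [eP z, eP w, eE z, eE w]
    refine g_anti_aux ?_ ?_ hcneg hz hzw
    · exact div_nonneg (by positivity) (mul_pos (h2RC RC (hRS.trans hRC)) hD).le
    · exact div_pos (by positivity) (mul_pos (h2RC RC (hRS.trans hRC)) hD)
  -- key: if G at (RC,RS) evaluated at z is < τ then μA2 RC RS < z
  have hlt : ∀ RC RS z : ℝ, 0 < RS → RS < RC → 0 < z →
      ((((2:ℝ) ^ (RC - RS) - 1) * PB * z * dAB ^ (-α)) /
          (((2:ℝ) ^ RC - 1) * (σB2 + ρ * PB * (μB / ρ))) + 1)⁻¹ *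
        ((((2:ℝ) ^ (RC - RS) - 1) * σE2 * z * dAB ^ (-α)) /
          (((2:ℝ) ^ RC - 1) * (σB2 + ρ * PB * (μB / ρ)))) ^ (-(2 / α)) < τ →
      μA2 RC RS < z := by
    intro RC RS z hRS hRC hz hG
    by_contra hcon
    push_neg at hcon
    have heq := hμA2 RC RS hRS hRC
    rcases eq_or_lt_of_le hcon with he | hlt'
    · rw [← he] at heq; linarith
    · have h2 := hanti RC RS hRS hRC z (μA2 RC RS) hz hlt'
      linarith
  rcases lt_trichotomy μ1 m with hc | hc | hc
  · -- Case μ1 < m : push RC up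
    exfalso
    have hcont : ContinuousAt
        (fun RC : ℝ => ((2:ℝ) ^ RC - 1) * (σB2 + PB * μB) * dAB ^ α / PAmax) RCo := by
      exact ((((continuousAt_const.rpow continuousAt_id (Or.inl two_ne_zero)).sub
        continuousAt_const).mul continuousAt_const).mul continuousAt_const).div_const _
    have hev1 : ∀ᶠ RC in 𝓝 RCo,
        ((2:ℝ) ^ RC - 1) * (σB2 + PB * μB) * dAB ^ α / PAmax < m :=
      hcont.eventually_mem (Iio_mem_nhds (by rw [← hμ1def]; exact hc))
    have hev : ∀ᶠ RC in 𝓝[>] RCo,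
        (((2:ℝ) ^ RC - 1) * (σB2 + PB * μB) * dAB ^ α / PAmax < m ∧ RCo < RC) :=
      (hev1.filter_mono nhdsWithin_le_nhds).and eventually_mem_nhdsWithin
    obtain ⟨RC', hA1', hgt⟩ := hev.exists
    have hRSRC' : RSo < RC' := hRCo.trans hgt
    set P := PB * m * dAB ^ (-α) / (σB2 + ρ * PB * (μB / ρ)) with hPdef
    set E := σE2 * m * dAB ^ (-α) / (σB2 + ρ * PB * (μB / ρ)) with hEdef
    have eform : ∀ RC : ℝ, RSo < RC →
        ((((2:ℝ) ^ (RC - RSo) - 1) * PB * m * dAB ^ (-α)) /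
            (((2:ℝ) ^ RC - 1) * (σB2 + ρ * PB * (μB / ρ))) =
          P * (((2:ℝ) ^ (RC - RSo) - 1) / ((2:ℝ) ^ RC - 1))) ∧
        ((((2:ℝ) ^ (RC - RSo) - 1) * σE2 * m * dAB ^ (-α)) /
            (((2:ℝ) ^ RC - 1) * (σB2 + ρ * PB * (μB / ρ))) =
          E * (((2:ℝ) ^ (RC - RSo) - 1) / ((2:ℝ) ^ RC - 1))) := by
      intro RC hRC
      have hden : ((2:ℝ) ^ RC - 1) ≠ 0 := ne_of_gt (h2RC RC (hRSo.trans hRC))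
      constructor
      · rw [hPdef]; field_simp
      · rw [hEdef]; field_simp
    have hPnn : 0 ≤ P := by rw [hPdef]; positivity
    have hEpos : 0 < E := by rw [hEdef]; positivity
    have hu0 : 0 < ((2:ℝ) ^ (RCo - RSo) - 1) / ((2:ℝ) ^ RCo - 1) :=
      div_pos (h2RC _ (by linarith)) (h2RC _ hRCo0)
    have humono := u_mono_aux hRSo hRCo hgt
    have hganti := g_anti_aux hPnn hEpos hcneg hu0 humono
    have heqo := hμA2 RCo RSo hRSo hRCo
    rw [← hmdef] at heqo
    rw [(eform RCo hRCo).1, (eform RCo hRCo).2] at heqo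
    have hG' : ((((2:ℝ) ^ (RC' - RSo) - 1) * PB * m * dAB ^ (-α)) /
          (((2:ℝ) ^ RC' - 1) * (σB2 + ρ * PB * (μB / ρ))) + 1)⁻¹ *
        ((((2:ℝ) ^ (RC' - RSo) - 1) * σE2 * m * dAB ^ (-α)) /
          (((2:ℝ) ^ RC' - 1) * (σB2 + ρ * PB * (μB / ρ)))) ^ (-(2 / α)) < τ := by
      rw [(eform RC' hRSRC').1, (eform RC' hRSRC').2]
      calc _ < _ := hganti
        _ = τ := heqo
    have hw' : μA2 RC' RSo < m := hlt RC' RSo m hRSo hRSRC' hm hG'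
    have hop := hopt RC' RSo hRSo hRSRC'
    rw [max_eq_right hc.le] at hop
    have hmax' : max (((2:ℝ) ^ RC' - 1) * (σB2 + PB * μB) * dAB ^ α / PAmax)
        (μA2 RC' RSo) < m := max_lt hA1' hw'
    have hexp : Real.exp (-m) <
        Real.exp (-(max (((2:ℝ) ^ RC' - 1) * (σB2 + PB * μB) * dAB ^ α / PAmax)
          (μA2 RC' RSo))) := Real.exp_lt_exp.mpr (by linarith)
    have := mul_lt_mul_of_pos_left hexp hRSo
    linarith
  · exact hc
  · -- Case m < μ1 : push RS up
    exfalso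
    have hg0 : (0:ℝ) < (2:ℝ) ^ (RCo - RSo) - 1 := h2RC _ (by linarith)
    have hdenpos : 0 < ((2:ℝ) ^ RCo - 1) * (σB2 + ρ * PB * (μB / ρ)) :=
      mul_pos (h2RC RCo hRCo0) hD
    have hb : ContinuousAt (fun RS : ℝ => (2:ℝ) ^ (RCo - RS)) RSo :=
      continuousAt_const.rpow (continuousAt_const.sub continuousAt_id)
        (Or.inl two_ne_zero)
    have hb1 : ContinuousAt (fun RS : ℝ =>
        (((2:ℝ) ^ (RCo - RS) - 1) * PB * μ1 * dAB ^ (-α)) /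
          (((2:ℝ) ^ RCo - 1) * (σB2 + ρ * PB * (μB / ρ)))) RSo :=
      ((((hb.sub continuousAt_const).mul continuousAt_const).mul
        continuousAt_const).mul continuousAt_const).div_const _
    have hb2 : ContinuousAt (fun RS : ℝ =>
        (((2:ℝ) ^ (RCo - RS) - 1) * σE2 * μ1 * dAB ^ (-α)) /
          (((2:ℝ) ^ RCo - 1) * (σB2 + ρ * PB * (μB / ρ)))) RSo :=
      ((((hb.sub continuousAt_const).mul continuousAt_const).mul
        continuousAt_const).mul continuousAt_const).div_const _
    have hx0 : 0 ≤ (((2:ℝ) ^ (RCo - RSo) - 1) * PB * μ1 * dAB ^ (-α)) /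
        (((2:ℝ) ^ RCo - 1) * (σB2 + ρ * PB * (μB / ρ))) :=
      div_nonneg (by positivity) hdenpos.le
    have hy0 : 0 < (((2:ℝ) ^ (RCo - RSo) - 1) * σE2 * μ1 * dAB ^ (-α)) /
        (((2:ℝ) ^ RCo - 1) * (σB2 + ρ * PB * (μB / ρ))) :=
      div_pos (by positivity) hdenpos
    have hcont : ContinuousAt (fun RS : ℝ =>
        ((((2:ℝ) ^ (RCo - RS) - 1) * PB * μ1 * dAB ^ (-α)) /
            (((2:ℝ) ^ RCo - 1) * (σB2 + ρ * PB * (μB / ρ))) + 1)⁻¹ *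
          ((((2:ℝ) ^ (RCo - RS) - 1) * σE2 * μ1 * dAB ^ (-α)) /
            (((2:ℝ) ^ RCo - 1) * (σB2 + ρ * PB * (μB / ρ)))) ^ (-(2 / α))) RSo :=
      ((hb1.add continuousAt_const).inv₀ (ne_of_gt (add_pos_of_nonneg_of_pos hx0 one_pos))).mul
        (hb2.rpow_const (Or.inl (ne_of_gt hy0)))
    have hval : ((((2:ℝ) ^ (RCo - RSo) - 1) * PB * μ1 * dAB ^ (-α)) /
          (((2:ℝ) ^ RCo - 1) * (σB2 + ρ * PB * (μB / ρ))) + 1)⁻¹ *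
        ((((2:ℝ) ^ (RCo - RSo) - 1) * σE2 * μ1 * dAB ^ (-α)) /
          (((2:ℝ) ^ RCo - 1) * (σB2 + ρ * PB * (μB / ρ)))) ^ (-(2 / α)) < τ := by
      have h2 := hanti RCo RSo hRSo hRCo m μ1 hm hc
      have heqo := hμA2 RCo RSo hRSo hRCo
      rw [← hmdef] at heqo
      linarith
    have hev1 := hcont.eventually_mem (Iio_mem_nhds hval)
    have hev : ∀ᶠ RS in 𝓝[>] RSo,
        (((((2:ℝ) ^ (RCo - RS) - 1) * PB * μ1 * dAB ^ (-α)) /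
            (((2:ℝ) ^ RCo - 1) * (σB2 + ρ * PB * (μB / ρ))) + 1)⁻¹ *
          ((((2:ℝ) ^ (RCo - RS) - 1) * σE2 * μ1 * dAB ^ (-α)) /
            (((2:ℝ) ^ RCo - 1) * (σB2 + ρ * PB * (μB / ρ)))) ^ (-(2 / α)) < τ
          ∧ RS < RCo) ∧ RSo < RS := by
      refine Filter.Eventually.and ?_ eventually_mem_nhdsWithin
      exact (hev1.and (eventually_lt_nhds hRCo)).filter_mono nhdsWithin_le_nhds
    obtain ⟨RS', ⟨hGRS', hRS'lt⟩, hRS'gt⟩ := hev.exists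
    have hRS'pos : 0 < RS' := hRSo.trans hRS'gt
    have hw' : μA2 RCo RS' < μ1 := hlt RCo RS' μ1 hRS'pos hRS'lt hμ1pos hGRS'
    have hop := hopt RCo RS' hRS'pos hRS'lt
    rw [max_eq_left hc.le, max_eq_left hw'.le] at hop
    have h3 := mul_lt_mul_of_pos_right hRS'gt (Real.exp_pos (-μ1))
    linarith
end
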